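/- arXiv:2207.01403 — 2 statements merged into one kernel-verified Lean document; each statement's English description precedes it below -/
import Mathlib

section
/- Let E be a mixed-unitary quantum channel E(·) = Σ_i p_i U_i (·) U_i† with p_i ≥ 0, Σ p_i = 1, which is invertible as a linear map, and suppose its inverse has the form E⁻¹(·) = Σ_j q_j V_j (·) V_j† with unitaries V_j and real q_j. Then for any density operator ρ₀ and ρ = E(ρ₀) on a d-dimensional space, (Σ_j |q_j|)⁻² (Tr[ρ₀²]·d − 1) ≤ Tr[ρ²]·d − 1 ≤ Tr[ρ₀²]·d − 1. -/
open Matrix Finset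
open scoped ComplexOrder

attribute [local instance] Matrix.frobeniusSeminormedAddCommGroup
  Matrix.frobeniusNormedSpace

lemma frob_sq_eq_trace {d : ℕ} (X : Matrix (Fin d) (Fin d) ℂ) :
    ‖X‖ ^ 2 = (Matrix.trace (Xᴴ * X)).re := by
  have h0 : (0:ℝ) ≤ ∑ i, ∑ j, ‖X i j‖ ^ (2:ℝ) := by positivity
  have h1 : ‖X‖ ^ 2 = ∑ i, ∑ j, ‖X i j‖ ^ 2 := by
    rw [Matrix.frobenius_norm_def,
      ← Real.rpow_natCast ((∑ i, ∑ j, ‖X i j‖ ^ (2:ℝ)) ^ (1/2 : ℝ)) 2,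
      ← Real.rpow_mul h0]
    norm_num
  rw [h1, Matrix.trace, Complex.re_sum, Finset.sum_comm]
  refine Finset.sum_congr rfl fun j _ => ?_
  rw [Matrix.diag_apply, Matrix.mul_apply, Complex.re_sum]
  refine Finset.sum_congr rfl fun i _ => ?_
  simp only [Matrix.conjTranspose_apply]
  rw [Complex.star_def, Complex.conj_mul']
  simp [Complex.normSq_eq_norm_sq, ← Complex.ofReal_pow]

lemma frob_unitary_conj {d : ℕ} (U X : Matrix (Fin d) (Fin d) ℂ)
    (hU : U ∈ Matrix.unitaryGroup (Fin d) ℂ) :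
    ‖U * X * Uᴴ‖ = ‖X‖ := by
  have hU1 : Uᴴ * U = 1 := by
    have := Matrix.mem_unitaryGroup_iff'.mp hU
    rwa [Matrix.star_eq_conjTranspose] at this
  have hsq : ‖U * X * Uᴴ‖ ^ 2 = ‖X‖ ^ 2 := by
    rw [frob_sq_eq_trace, frob_sq_eq_trace]
    congr 1
    have h : (U * X * Uᴴ)ᴴ * (U * X * Uᴴ) = U * (Xᴴ * (Uᴴ * U) * X) * Uᴴ := by
      simp only [Matrix.conjTranspose_mul, Matrix.conjTranspose_conjTranspose]
      noncomm_ring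
    rw [h, hU1, Matrix.mul_one, Matrix.trace_mul_cycle, ← Matrix.mul_assoc, hU1,
      Matrix.one_mul]
  have h1 : (0:ℝ) ≤ ‖U * X * Uᴴ‖ := norm_nonneg _
  have h2 : (0:ℝ) ≤ ‖X‖ := norm_nonneg _
  nlinarith

lemma purity_eq {d : ℕ} (hd : 0 < d) (X : Matrix (Fin d) (Fin d) ℂ)
    (hX : Xᴴ = X) (htrX : X.trace = 1) :
    (Matrix.trace (X * X)).re * d - 1
      = d * ‖X - ((d:ℂ)⁻¹) • (1 : Matrix (Fin d) (Fin d) ℂ)‖ ^ 2 := by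
  set A := X - ((d:ℂ)⁻¹) • (1 : Matrix (Fin d) (Fin d) ℂ) with hA
  have hAH : Aᴴ = A := by
    rw [hA, Matrix.conjTranspose_sub, hX, Matrix.conjTranspose_smul]
    congr 1
    simp [Complex.star_def, Complex.conj_inv]
  have hdC : (d:ℂ) ≠ 0 := Nat.cast_ne_zero.mpr hd.ne'
  have htrace : Matrix.trace (Aᴴ * A) = Matrix.trace (X * X) - (d:ℂ)⁻¹ := by
    rw [hAH, hA]
    simp only [Matrix.sub_mul, Matrix.mul_sub, Matrix.smul_mul, Matrix.mul_smul,
      Matrix.mul_one, Matrix.one_mul, Matrix.trace_sub, Matrix.trace_smul,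
      smul_smul, htrX, Matrix.trace_one, smul_eq_mul, mul_one, Fintype.card_fin]
    try field_simp
    try ring
  rw [frob_sq_eq_trace, htrace, Complex.sub_re]
  have hdR : (d:ℝ) ≠ 0 := Nat.cast_ne_zero.mpr hd.ne'
  have : ((d:ℂ)⁻¹).re = (d:ℝ)⁻¹ := by
    rw [← Complex.ofReal_natCast, ← Complex.ofReal_inv, Complex.ofReal_re]
  rw [this]
  try field_simp
  try ring

/-- For a mixed-unitary channel E(·) = Σ_i p_i U_i (·) U_i† (p_i ≥ 0, Σ p_i = 1),
invertible as a linear map with inverse of the mixed-unitary form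
E⁻¹(·) = Σ_j q_j V_j (·) V_j†, the purities of ρ₀ and ρ = E(ρ₀) satisfy
(Σ_j |q_j|)⁻² (Tr[ρ₀²]·d − 1) ≤ Tr[ρ²]·d − 1 ≤ Tr[ρ₀²]·d − 1. -/
theorem mixed_unitary_purity_two_sided (d : ℕ) {ι κ : Type*} [Fintype ι] [Fintype κ]
    (p : ι → ℝ) (U : ι → Matrix (Fin d) (Fin d) ℂ)
    (q : κ → ℝ) (V : κ → Matrix (Fin d) (Fin d) ℂ)
    (hU : ∀ i, U i ∈ Matrix.unitaryGroup (Fin d) ℂ)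
    (hV : ∀ j, V j ∈ Matrix.unitaryGroup (Fin d) ℂ)
    (hp : ∀ i, 0 ≤ p i) (hp1 : ∑ i, p i = 1)
    (E Einv : Matrix (Fin d) (Fin d) ℂ → Matrix (Fin d) (Fin d) ℂ)
    (hE : ∀ X, E X = ∑ i, (p i : ℂ) • (U i * X * (U i)ᴴ))
    (hEinv : ∀ X, Einv X = ∑ j, (q j : ℂ) • (V j * X * (V j)ᴴ))
    (hinv₁ : ∀ X, Einv (E X) = X) (hinv₂ : ∀ X, E (Einv X) = X)
    (ρ₀ ρ : Matrix (Fin d) (Fin d) ℂ)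
    (h0 : ρ₀.PosSemidef) (htr : ρ₀.trace = 1)
    (hρ : ρ = E ρ₀) :
    (∑ j, |q j|) ^ (-2 : ℤ) * ((Matrix.trace (ρ₀ * ρ₀)).re * d - 1)
        ≤ (Matrix.trace (ρ * ρ)).re * d - 1
      ∧ (Matrix.trace (ρ * ρ)).re * d - 1 ≤ (Matrix.trace (ρ₀ * ρ₀)).re * d - 1 := by
  have hd : 0 < d := by
    by_contra h
    push_neg at h
    interval_cases d
    · simp [Matrix.trace] at htr
  have hdC : (d:ℂ) ≠ 0 := Nat.cast_ne_zero.mpr hd.ne'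
  have hUU : ∀ i, U i * (U i)ᴴ = 1 := fun i => by
    have := Matrix.mem_unitaryGroup_iff.mp (hU i)
    rwa [Matrix.star_eq_conjTranspose] at this
  have hVV : ∀ j, V j * (V j)ᴴ = 1 := fun j => by
    have := Matrix.mem_unitaryGroup_iff.mp (hV j)
    rwa [Matrix.star_eq_conjTranspose] at this
  have hUstar : ∀ i, (U i)ᴴ * U i = 1 := fun i => by
    have := Matrix.mem_unitaryGroup_iff'.mp (hU i)
    rwa [Matrix.star_eq_conjTranspose] at this
  -- E(1) = 1
  have hE1 : E 1 = 1 := by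
    rw [hE]
    have h : ∀ i, (p i : ℂ) • (U i * 1 * (U i)ᴴ)
        = (p i : ℂ) • (1 : Matrix (Fin d) (Fin d) ℂ) := by
      intro i; rw [Matrix.mul_one, hUU i]
    rw [Finset.sum_congr rfl fun i _ => h i, ← Finset.sum_smul]
    have h2 : (∑ i, (p i : ℂ)) = 1 := by
      rw [← Complex.ofReal_sum, hp1, Complex.ofReal_one]
    rw [h2, one_smul]
  -- ∑ q = 1
  have hq1 : ∑ j, q j = 1 := by
    have h1 : Einv 1 = 1 := by have := hinv₁ 1; rwa [hE1] at this
    rw [hEinv] at h1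
    have h2 : (∑ j, (q j : ℂ)) • (1 : Matrix (Fin d) (Fin d) ℂ) = 1 := by
      calc (∑ j, (q j : ℂ)) • (1 : Matrix (Fin d) (Fin d) ℂ)
          = ∑ j, (q j : ℂ) • (1 : Matrix (Fin d) (Fin d) ℂ) := Finset.sum_smul
        _ = ∑ j, (q j : ℂ) • (V j * 1 * (V j)ᴴ) := by
            refine Finset.sum_congr rfl fun j _ => ?_
            rw [Matrix.mul_one, hVV j]
        _ = 1 := h1
    have h3 : (∑ j, (q j : ℂ)) = 1 := by
      have := congrFun (congrFun h2 ⟨0, hd⟩) ⟨0, hd⟩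
      simpa [Matrix.smul_apply, Matrix.one_apply] using this
    exact_mod_cast h3
  set s : ℝ := ∑ j, |q j| with hs
  have hs1 : 1 ≤ s := by
    calc (1:ℝ) = |∑ j, q j| := by rw [hq1, abs_one]
    _ ≤ ∑ j, |q j| := Finset.abs_sum_le_sum_abs _ _
  have hspos : 0 < s := lt_of_lt_of_le one_pos hs1
  set A₀ := ρ₀ - ((d:ℂ)⁻¹) • (1 : Matrix (Fin d) (Fin d) ℂ) with hA₀
  set A := ρ - ((d:ℂ)⁻¹) • (1 : Matrix (Fin d) (Fin d) ℂ) with hA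
  have hAeq : A = ∑ i, (p i : ℂ) • (U i * A₀ * (U i)ᴴ) := by
    rw [hA, hρ, hE, hA₀]
    have h : ∀ i, (p i : ℂ) • (U i * (ρ₀ - (d:ℂ)⁻¹ • 1) * (U i)ᴴ)
        = (p i : ℂ) • (U i * ρ₀ * (U i)ᴴ)
          - (p i : ℂ) • ((d:ℂ)⁻¹ • (1 : Matrix (Fin d) (Fin d) ℂ)) := by
      intro i
      rw [Matrix.mul_sub, Matrix.sub_mul, smul_sub]
      congr 1
      rw [Matrix.mul_smul, Matrix.smul_mul, Matrix.mul_one, hUU i]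
    rw [Finset.sum_congr rfl fun i _ => h i, Finset.sum_sub_distrib, ← Finset.sum_smul]
    have hps : (∑ i, (p i : ℂ)) = 1 := by
      rw [← Complex.ofReal_sum, hp1, Complex.ofReal_one]
    rw [hps, one_smul]
  have hρ₀eq : ρ₀ = Einv ρ := by rw [hρ, hinv₁]
  have hA₀eq : A₀ = ∑ j, (q j : ℂ) • (V j * A * (V j)ᴴ) := by
    rw [hA₀, hρ₀eq, hEinv, hA]
    have h : ∀ j, (q j : ℂ) • (V j * (ρ - (d:ℂ)⁻¹ • 1) * (V j)ᴴ)
        = (q j : ℂ) • (V j * ρ * (V j)ᴴ)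
          - (q j : ℂ) • ((d:ℂ)⁻¹ • (1 : Matrix (Fin d) (Fin d) ℂ)) := by
      intro j
      rw [Matrix.mul_sub, Matrix.sub_mul, smul_sub]
      congr 1
      rw [Matrix.mul_smul, Matrix.smul_mul, Matrix.mul_one, hVV j]
    rw [Finset.sum_congr rfl fun j _ => h j, Finset.sum_sub_distrib, ← Finset.sum_smul]
    have hqs : (∑ j, (q j : ℂ)) = 1 := by
      rw [← Complex.ofReal_sum, hq1, Complex.ofReal_one]
    rw [hqs, one_smul]
  have hnA : ‖A‖ ≤ ‖A₀‖ := by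
    calc ‖A‖ = ‖∑ i, (p i : ℂ) • (U i * A₀ * (U i)ᴴ)‖ := by rw [hAeq]
    _ ≤ ∑ i, ‖(p i : ℂ) • (U i * A₀ * (U i)ᴴ)‖ := norm_sum_le _ _
    _ = ∑ i, p i * ‖A₀‖ := by
        refine Finset.sum_congr rfl fun i _ => ?_
        rw [norm_smul, frob_unitary_conj _ _ (hU i)]
        simp [abs_of_nonneg (hp i)]
    _ = ‖A₀‖ := by rw [← Finset.sum_mul, hp1, one_mul]
  have hnA₀ : ‖A₀‖ ≤ s * ‖A‖ := by
    calc ‖A₀‖ = ‖∑ j, (q j : ℂ) • (V j * A * (V j)ᴴ)‖ := by rw [hA₀eq]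
    _ ≤ ∑ j, ‖(q j : ℂ) • (V j * A * (V j)ᴴ)‖ := norm_sum_le _ _
    _ = ∑ j, |q j| * ‖A‖ := by
        refine Finset.sum_congr rfl fun j _ => ?_
        rw [norm_smul, frob_unitary_conj _ _ (hV j)]
        simp [Complex.norm_real]
    _ = s * ‖A‖ := by rw [← Finset.sum_mul]
  have hρH : ρᴴ = ρ := by
    rw [hρ, hE, Matrix.conjTranspose_sum]
    refine Finset.sum_congr rfl fun i _ => ?_
    rw [Matrix.conjTranspose_smul]
    simp only [Matrix.conjTranspose_mul, Matrix.conjTranspose_conjTranspose,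
      Complex.star_def, Complex.conj_ofReal]
    rw [h0.1.eq, Matrix.mul_assoc]
  have htrρ : ρ.trace = 1 := by
    rw [hρ, hE, Matrix.trace_sum]
    have h : ∀ i, Matrix.trace ((p i : ℂ) • (U i * ρ₀ * (U i)ᴴ)) = (p i : ℂ) := by
      intro i
      rw [Matrix.trace_smul, Matrix.trace_mul_cycle, hUstar i,
        Matrix.one_mul, htr, smul_eq_mul, mul_one]
    rw [Finset.sum_congr rfl fun i _ => h i, ← Complex.ofReal_sum, hp1,
      Complex.ofReal_one]
  have hpur0 : (Matrix.trace (ρ₀ * ρ₀)).re * d - 1 = d * ‖A₀‖ ^ 2 := by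
    rw [hA₀]; exact purity_eq hd ρ₀ h0.1.eq htr
  have hpur : (Matrix.trace (ρ * ρ)).re * d - 1 = d * ‖A‖ ^ 2 := by
    rw [hA]; exact purity_eq hd ρ hρH htrρ
  rw [hpur0, hpur]
  have ha : (0:ℝ) ≤ ‖A‖ := norm_nonneg _
  have hb : (0:ℝ) ≤ ‖A₀‖ := norm_nonneg _
  have hzpow : s ^ (-2 : ℤ) = (s ^ 2)⁻¹ := by
    rw [_root_.zpow_neg, show (2:ℤ) = ((2:ℕ):ℤ) from rfl, zpow_natCast]
  have hdR : (0:ℝ) ≤ (d:ℝ) := Nat.cast_nonneg d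
  constructor
  · rw [hzpow, inv_mul_le_iff₀ (by positivity)]
    have hsq : ‖A₀‖ ^ 2 ≤ (s * ‖A‖) ^ 2 := by nlinarith
    nlinarith
  · have hsq : ‖A‖ ^ 2 ≤ ‖A₀‖ ^ 2 := by nlinarith
    nlinarith
end

section
/- Under the conditions of the separable-map negativity bound: if a noise channel E and its inverse E⁻¹ both admit decompositions into real combinations of product channels, and η(E⁻¹) denotes log₂ of the minimal Σ|q_i| over decompositions E⁻¹ = Σ q_i T_i^A ⊗ T_i^B, then for any bipartite density operator ρ₀ and ρ = E(ρ₀): E_N(ρ₀) − η(E⁻¹) ≤ E_N(ρ) ≤ E_N(ρ₀), where E_N(σ) = log₂‖σ^{T_B}‖₁ is the logarithmic negativity. -/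
open Matrix
open scoped ComplexOrder

/-- The square root `Matrix.PosSemidef.sqrt` of the older Mathlib, with its old definition. -/
noncomputable def posSemidefSqrt {n : Type*} [Fintype n] [DecidableEq n]
    {A : Matrix n n ℂ} (hA : A.PosSemidef) : Matrix n n ℂ :=
  hA.1.eigenvectorUnitary.1 * diagonal ((↑) ∘ (√·) ∘ hA.1.eigenvalues) *
    (star hA.1.eigenvectorUnitary : Matrix n n ℂ)

/-- Trace norm ‖A‖₁ = Tr √(AᴴA). -/
noncomputable def traceNorm {n : Type*} [Fintype n] [DecidableEq n]
    (A : Matrix n n ℂ) : ℝ :=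
  ((posSemidefSqrt (Matrix.posSemidef_conjTranspose_mul_self A)).trace).re

/-- The extension (id_m ⊗ T) of a map on matrices, acting blockwise. -/
def matExt {m n : Type*} [Fintype n] [DecidableEq n]
    (T : Matrix n n ℂ →ₗ[ℂ] Matrix n n ℂ)
    (M : Matrix (m × n) (m × n) ℂ) : Matrix (m × n) (m × n) ℂ :=
  Matrix.of fun p q => T (Matrix.of fun a b => M (p.1, a) (q.1, b)) p.2 q.2

/-- A linear map on matrices is CPTP if it preserves traces and all its
ancilla extensions (id ⊗ T) preserve positive semidefiniteness. -/
def IsCPTP {n : Type*} [Fintype n] [DecidableEq n]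
    (T : Matrix n n ℂ →ₗ[ℂ] Matrix n n ℂ) : Prop :=
  (∀ X : Matrix n n ℂ, (T X).trace = X.trace) ∧
  ∀ (m : ℕ) (M : Matrix (Fin m × n) (Fin m × n) ℂ), M.PosSemidef → (matExt T M).PosSemidef

/-- Action of a map on the A factor of a bipartite system. -/
def applyA {a b : Type*} [Fintype a] [DecidableEq a] [Fintype b] [DecidableEq b]
    (TA : Matrix a a ℂ →ₗ[ℂ] Matrix a a ℂ)
    (X : Matrix (a × b) (a × b) ℂ) : Matrix (a × b) (a × b) ℂ :=
  Matrix.of fun p q => TA (Matrix.of fun i j => X (i, p.2) (j, q.2)) p.1 q.1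

/-- Action of a map on the B factor of a bipartite system. -/
def applyB {a b : Type*} [Fintype a] [DecidableEq a] [Fintype b] [DecidableEq b]
    (TB : Matrix b b ℂ →ₗ[ℂ] Matrix b b ℂ)
    (X : Matrix (a × b) (a × b) ℂ) : Matrix (a × b) (a × b) ℂ :=
  Matrix.of fun p q => TB (Matrix.of fun k l => X (p.1, k) (q.1, l)) p.2 q.2

/-- The product map T^A ⊗ T^B on a bipartite system. -/
def prodMap {a b : Type*} [Fintype a] [DecidableEq a] [Fintype b] [DecidableEq b]
    (TA : Matrix a a ℂ →ₗ[ℂ] Matrix a a ℂ) (TB : Matrix b b ℂ →ₗ[ℂ] Matrix b b ℂ)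
    (X : Matrix (a × b) (a × b) ℂ) : Matrix (a × b) (a × b) ℂ :=
  applyA TA (applyB TB X)

/-- Partial transpose over the B factor. -/
def ptB {a b : Type*} (M : Matrix (a × b) (a × b) ℂ) : Matrix (a × b) (a × b) ℂ :=
  Matrix.of fun p q => M (p.1, q.2) (q.1, p.2)

lemma psd_diag_re_nonneg' {n : Type*} [Fintype n] [DecidableEq n] {X : Matrix n n ℂ}
    (hX : X.PosSemidef) (i : n) : 0 ≤ (X i i).re := by
  have h := hX.dotProduct_mulVec_nonneg (Pi.single i 1)
  have e : star (Pi.single i 1) ⬝ᵥ X *ᵥ Pi.single i 1 = X i i := by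
    simp [mulVec_single, dotProduct, Pi.single_apply]
  rw [e] at h
  exact (Complex.le_def.mp h).1

lemma psd_trace_re_nonneg {n : Type*} [Fintype n] [DecidableEq n] {X : Matrix n n ℂ}
    (hX : X.PosSemidef) : 0 ≤ X.trace.re := by
  rw [Matrix.trace, Complex.re_sum]
  exact Finset.sum_nonneg fun i _ => psd_diag_re_nonneg' hX i

set_option maxHeartbeats 2000000 in
lemma herm_package {n : Type*} [Fintype n] [DecidableEq n] {H : Matrix n n ℂ}
    (hH : H.IsHermitian) :
    (∃ P N : Matrix n n ℂ, P.PosSemidef ∧ N.PosSemidef ∧ H = P - N ∧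
      traceNorm H = P.trace.re + N.trace.re) ∧
    (∀ A B : Matrix n n ℂ, A.PosSemidef → B.PosSemidef → H = A - B →
      traceNorm H ≤ A.trace.re + B.trace.re) ∧
    |H.trace.re| ≤ traceNorm H := by
  classical
  set V : Matrix n n ℂ := (hH.eigenvectorUnitary : Matrix n n ℂ) with hV
  set lam := hH.eigenvalues with hlam
  have hU2 : V * star V = 1 := mem_unitaryGroup_iff.mp hH.eigenvectorUnitary.2
  have hU1 : star V * V = 1 := mem_unitaryGroup_iff'.mp hH.eigenvectorUnitary.2
  set D : (ℝ → ℝ) → Matrix n n ℂ := fun f => diagonal (fun i => ((f (lam i) : ℝ) : ℂ)) with hD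
  set c : Matrix n n ℂ → Matrix n n ℂ := fun M => V * M * star V with hc
  have hDmul : ∀ f g : ℝ → ℝ, D f * D g = D (fun x => f x * g x) := by
    intro f g
    simp [hD, diagonal_mul_diagonal]
  have hcmul : ∀ f g : ℝ → ℝ, c (D f) * c (D g) = c (D (fun x => f x * g x)) := by
    intro f g
    calc V * D f * star V * (V * D g * star V)
        = V * (D f * (star V * V) * D g) * star V := by noncomm_ring
      _ = V * (D f * D g) * star V := by rw [hU1]; simp [Matrix.mul_one]
      _ = c (D (fun x => f x * g x)) := by rw [hDmul]
  have hcsub : ∀ f g : ℝ → ℝ, c (D f) - c (D g) = c (D (fun x => f x - g x)) := by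
    intro f g
    simp only [hc, hD]
    rw [← Matrix.sub_mul, ← Matrix.mul_sub, diagonal_sub]
    congr 1
    congr 1
    congr 1
    ext i
    push_cast
    ring
  have hctr : ∀ f : ℝ → ℝ, (c (D f)).trace = ∑ i, ((f (lam i) : ℝ) : ℂ) := by
    intro f
    rw [hc]
    rw [trace_mul_cycle, hU1, Matrix.one_mul, hD, trace_diagonal]
  have hcpsd : ∀ f : ℝ → ℝ, (∀ i, 0 ≤ f (lam i)) → (c (D f)).PosSemidef := by
    intro f hf
    have hdiag : (D f).PosSemidef := by
      rw [hD]
      refine posSemidef_diagonal_iff.mpr fun i => ?_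
      exact_mod_cast Complex.zero_le_real.mpr (hf i)
    have := hdiag.mul_mul_conjTranspose_same V
    simpa [hc, Matrix.star_eq_conjTranspose] using this
  have hcH : H = c (D id) := by
    simpa [hc, hD, Function.comp_def] using hH.spectral_theorem
  have habs_psd : (c (D (fun x => |x|))).PosSemidef := hcpsd (fun x => |x|) (fun i => abs_nonneg _)
  have hsq : (c (D (fun x => |x|))) ^ 2 = Hᴴ * H := by
    rw [pow_two, hcmul, show Hᴴ = H from hH]
    conv_rhs => rw [hcH]
    rw [hcmul]
    have he : (fun x : ℝ => |x| * |x|) = (fun x : ℝ => id x * id x) := by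
      funext x; simpa using abs_mul_abs_self x
    rw [he]
  have hsqrt : posSemidefSqrt (Matrix.posSemidef_conjTranspose_mul_self H) = c (D (fun x => |x|)) := by
    have e1 : posSemidefSqrt (Matrix.posSemidef_conjTranspose_mul_self H) = cfc Real.sqrt (Hᴴ * H) := by
      rw [IsHermitian.cfc_eq (Matrix.posSemidef_conjTranspose_mul_self H).1, IsHermitian.cfc,
        Unitary.conjStarAlgAut_apply]
      rfl
    have e2 : c (D (fun x => |x|)) = cfc (fun x : ℝ => |x|) H := by
      rw [IsHermitian.cfc_eq hH, IsHermitian.cfc, Unitary.conjStarAlgAut_apply]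
      rfl
    have hsa : IsSelfAdjoint H := hH
    have e3 : Hᴴ * H = cfc (fun x : ℝ => x * x) H := by
      rw [cfc_mul (fun x : ℝ => x) (fun x : ℝ => x) H, cfc_id' ℝ H, show Hᴴ = H from hH]
    rw [e1, e2, e3, ← cfc_comp Real.sqrt (fun x : ℝ => x * x) H]
    congr 1
    funext x
    exact Real.sqrt_mul_self_eq_abs x
  have htn : traceNorm H = ∑ i, |lam i| := by
    rw [traceNorm, hsqrt, hctr, Complex.re_sum]
    simp
  have htrf : ∀ f : ℝ → ℝ, (c (D f)).trace.re = ∑ i, f (lam i) := by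
    intro f
    rw [hctr, Complex.re_sum]
    simp
  have key1 : ∀ g : ℝ → ℝ, (∀ x, g x * g x = g x) →
      ∀ X : Matrix n n ℂ, X.PosSemidef → 0 ≤ ((c (D g) * X).trace).re := by
    intro g hg X hX
    set C : Matrix n n ℂ := D g * star V with hCdef
    have hDH : (D g)ᴴ = D g := by
      rw [hD, diagonal_conjTranspose]
      have : (star fun i => ((g (lam i) : ℝ) : ℂ)) = fun i => ((g (lam i) : ℝ) : ℂ) := by
        funext i; simp [Pi.star_apply, Complex.conj_ofReal]
      rw [this]
    have hCH : Cᴴ = V * D g := by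
      rw [hCdef, conjTranspose_mul, hDH, ← star_eq_conjTranspose, star_star]
    have hCC : Cᴴ * C = c (D g) := by
      rw [hCH, hCdef]
      calc V * D g * (D g * star V) = V * (D g * D g) * star V := by noncomm_ring
        _ = c (D g) := by rw [hDmul, show (fun x => g x * g x) = g from funext hg]
    have h1 : (c (D g) * X).trace = (C * X * Cᴴ).trace := by
      rw [← hCC, Matrix.mul_assoc, trace_mul_comm, Matrix.mul_assoc]
    rw [h1]
    exact psd_trace_re_nonneg (hX.mul_mul_conjTranspose_same C)
  have h5 : c (D (fun _ => (1:ℝ))) = 1 := by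
    have : D (fun _ => (1:ℝ)) = 1 := by rw [hD]; simp [Matrix.diagonal_one]
    rw [this, hc]
    simp only [Matrix.mul_one]
    exact hU2
  have keybound : ∀ (X A' B' : Matrix n n ℂ), A'.PosSemidef → B'.PosSemidef → X = A' - B' →
      ∀ g : ℝ → ℝ, (∀ x, g x * g x = g x) → (c (D g) * X).trace.re ≤ A'.trace.re := by
    intro X A' B' hA hB hX g hg
    have h1 : (c (D g) * X).trace.re = (c (D g) * A').trace.re - (c (D g) * B').trace.re := by
      rw [hX, Matrix.mul_sub, trace_sub, Complex.sub_re]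
    have h2 : 0 ≤ ((c (D g) * B')).trace.re := key1 g hg B' hB
    have h3 : (c (D g) * A').trace.re ≤ A'.trace.re := by
      have hgc : ∀ x, (1 - g x) * (1 - g x) = 1 - g x := by
        intro x
        calc (1 - g x) * (1 - g x) = 1 - 2 * g x + g x * g x := by ring
          _ = 1 - g x := by rw [hg x]; ring
      have h4 : 0 ≤ ((c (D (fun x => 1 - g x)) * A')).trace.re := key1 (fun x => 1 - g x) hgc A' hA
      have h6 : c (D (fun x => 1 - g x)) = 1 - c (D g) := by
        rw [← hcsub (fun _ => (1:ℝ)) g, h5]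
      rw [h6, Matrix.sub_mul, Matrix.one_mul, trace_sub, Complex.sub_re] at h4
      linarith
    linarith
  have htrH : ∀ g : ℝ → ℝ, (c (D g) * H).trace.re = ∑ i, g (lam i) * lam i := by
    intro g
    conv_lhs => rw [hcH, hcmul]
    rw [htrf (fun x => g x * id x)]
    simp
  have habs2 : ∀ x : ℝ, |x| = max x 0 + max (-x) 0 := by
    intro x
    rcases le_total 0 x with h | h
    · rw [abs_of_nonneg h, max_eq_left h, max_eq_right (neg_nonpos.mpr h), add_zero]
    · rw [abs_of_nonpos h, max_eq_right h, max_eq_left (neg_nonneg.mpr h), zero_add]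
  refine ⟨⟨c (D (fun x => max x 0)), c (D (fun x => max (-x) 0)),
      hcpsd (fun x => max x 0) (fun i => le_max_right (lam i) 0), hcpsd (fun x => max (-x) 0) (fun i => le_max_right (-(lam i)) 0), ?_, ?_⟩, ?_, ?_⟩
  · have hfe : (fun x : ℝ => max x 0 - max (-x) 0) = id := by
      funext x
      rcases le_total 0 x with h | h
      · rw [max_eq_left h, max_eq_right (neg_nonpos.mpr h), sub_zero]; rfl
      · rw [max_eq_right h, max_eq_left (neg_nonneg.mpr h), zero_sub, neg_neg]; rfl
    rw [hcsub (fun x => max x 0) (fun x => max (-x) 0), hfe]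
    exact hcH
  · rw [htn, htrf (fun x => max x 0), htrf (fun x => max (-x) 0), ← Finset.sum_add_distrib]
    exact Finset.sum_congr rfl fun i _ => habs2 (lam i)
  · intro A B hA hB hABH
    set gpos : ℝ → ℝ := fun x => if 0 < x then 1 else 0 with hgpos
    set gneg : ℝ → ℝ := fun x => if x < 0 then 1 else 0 with hgneg
    have hgpos2 : ∀ x, gpos x * gpos x = gpos x := by
      intro x; simp only [hgpos]; split_ifs <;> ring
    have hgneg2 : ∀ x, gneg x * gneg x = gneg x := by
      intro x; simp only [hgneg]; split_ifs <;> ring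
    have hp : ∑ i, max (lam i) 0 ≤ A.trace.re := by
      have e1 : (c (D gpos) * H).trace.re = ∑ i, max (lam i) 0 := by
        rw [htrH]
        refine Finset.sum_congr rfl fun i _ => ?_
        simp only [hgpos]
        rcases lt_or_ge 0 (lam i) with h | h
        · rw [if_pos h, one_mul, max_eq_left h.le]
        · rw [if_neg (not_lt.mpr h), zero_mul, max_eq_right h]
      rw [← e1]
      exact keybound H A B hA hB hABH gpos hgpos2
    have hn : ∑ i, max (-(lam i)) 0 ≤ B.trace.re := by
      have e1 : (c (D gneg) * (-H)).trace.re = ∑ i, max (-(lam i)) 0 := by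
        have : (c (D gneg) * (-H)).trace.re = -((c (D gneg) * H).trace.re) := by
          rw [Matrix.mul_neg, trace_neg, Complex.neg_re]
        rw [this, htrH, ← Finset.sum_neg_distrib]
        refine Finset.sum_congr rfl fun i _ => ?_
        simp only [hgneg]
        rcases lt_or_ge (lam i) 0 with h | h
        · rw [if_pos h, one_mul, max_eq_left (by linarith)]
        · rw [if_neg (not_lt.mpr h), zero_mul, neg_zero, max_eq_right (by linarith)]
      rw [← e1]
      exact keybound (-H) B A hB hA (by rw [hABH, neg_sub]) gneg hgneg2
    rw [htn]
    calc ∑ i, |lam i| = ∑ i, (max (lam i) 0 + max (-(lam i)) 0) :=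
          Finset.sum_congr rfl fun i _ => habs2 (lam i)
      _ = (∑ i, max (lam i) 0) + ∑ i, max (-(lam i)) 0 := Finset.sum_add_distrib
      _ ≤ A.trace.re + B.trace.re := add_le_add hp hn
  · have e1 : H.trace.re = ∑ i, lam i := by
      conv_lhs => rw [hcH]
      rw [htrf id]
      simp
    rw [e1, htn]
    exact (Finset.abs_sum_le_sum_abs _ _)

lemma psd_smul {n : Type*} [Fintype n] [DecidableEq n] {X : Matrix n n ℂ}
    (hX : X.PosSemidef) {r : ℝ} (hr : 0 ≤ r) : ((r : ℂ) • X).PosSemidef := by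
  constructor
  · have := hX.1
    unfold Matrix.IsHermitian at *
    rw [conjTranspose_smul, this]
    simp [Complex.conj_ofReal]
  · intro x
    have hrc : (0:ℂ) ≤ (r:ℂ) := by exact_mod_cast Complex.zero_le_real.mpr hr
    exact (hX.smul hrc).2 x


section Chunk3
variable {a b : Type*} [Fintype a] [DecidableEq a] [Fintype b] [DecidableEq b]

/-- The "transposed" channel  Z ↦ (T Zᵀ)ᵀ. -/
def transposeMap {n : Type*} [Fintype n] [DecidableEq n]
    (T : Matrix n n ℂ →ₗ[ℂ] Matrix n n ℂ) : Matrix n n ℂ →ₗ[ℂ] Matrix n n ℂ where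
  toFun Z := (T Zᵀ)ᵀ
  map_add' X Y := by simp [Matrix.transpose_add]
  map_smul' c X := by simp [Matrix.transpose_smul]

lemma matExt_transposeMap {m n : Type*} [Fintype n] [DecidableEq n]
    (T : Matrix n n ℂ →ₗ[ℂ] Matrix n n ℂ) (M : Matrix (m × n) (m × n) ℂ) :
    matExt (transposeMap T) M = (matExt T Mᵀ)ᵀ := by
  ext p q
  show (T (Matrix.of fun a b => M (p.1, a) (q.1, b))ᵀ)ᵀ p.2 q.2
      = T (Matrix.of fun a b => Mᵀ (q.1, a) (p.1, b)) q.2 p.2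
  have harg : (Matrix.of fun a b => M (p.1, a) (q.1, b))ᵀ
      = Matrix.of fun a b => Mᵀ (q.1, a) (p.1, b) := by
    ext i j; simp [Matrix.transpose_apply]
  rw [Matrix.transpose_apply, harg]

lemma isCPTP_transposeMap {n : Type*} [Fintype n] [DecidableEq n]
    {T : Matrix n n ℂ →ₗ[ℂ] Matrix n n ℂ} (hT : IsCPTP T) : IsCPTP (transposeMap T) := by
  constructor
  · intro X
    show ((T Xᵀ)ᵀ).trace = X.trace
    rw [Matrix.trace_transpose, hT.1, Matrix.trace_transpose]
  · intro m M hM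
    rw [matExt_transposeMap]
    exact (hT.2 m Mᵀ hM.transpose).transpose

lemma applyB_posSemidef {TB : Matrix b b ℂ →ₗ[ℂ] Matrix b b ℂ} (hT : IsCPTP TB)
    {X : Matrix (a × b) (a × b) ℂ} (hX : X.PosSemidef) : (applyB TB X).PosSemidef := by
  classical
  set m := Fintype.card a with hm
  set e : a ≃ Fin m := Fintype.equivFin a with he
  set E2 : (Fin m × b) ≃ (a × b) := e.symm.prodCongr (Equiv.refl b) with hE2
  have hM : (X.submatrix E2 E2).PosSemidef := hX.submatrix E2
  have h2 := hT.2 m _ hM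
  have heq : matExt TB (X.submatrix E2 E2) = (applyB TB X).submatrix E2 E2 := by
    ext p q
    show TB (Matrix.of fun k l => X.submatrix E2 E2 ((p.1, k)) ((q.1, l))) p.2 q.2
        = applyB TB X (E2 p) (E2 q)
    have harg : (Matrix.of fun k l => X.submatrix E2 E2 ((p.1, k)) ((q.1, l)))
        = Matrix.of fun k l => X ((E2 p).1, k) ((E2 q).1, l) := by
      ext i j; simp [hE2]
    rw [harg]
    rfl
  rw [heq] at h2
  exact (posSemidef_submatrix_equiv E2).mp h2

lemma applyA_posSemidef {TA : Matrix a a ℂ →ₗ[ℂ] Matrix a a ℂ} (hT : IsCPTP TA)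
    {X : Matrix (a × b) (a × b) ℂ} (hX : X.PosSemidef) : (applyA TA X).PosSemidef := by
  classical
  set m := Fintype.card b with hm
  set e : b ≃ Fin m := Fintype.equivFin b with he
  set E2 : (Fin m × a) ≃ (a × b) :=
    ⟨fun p => (p.2, e.symm p.1), fun x => (e x.2, x.1), fun p => by simp, fun x => by simp⟩
    with hE2
  have hM : (X.submatrix E2 E2).PosSemidef := hX.submatrix E2
  have h2 := hT.2 m _ hM
  have heq : matExt TA (X.submatrix E2 E2) = (applyA TA X).submatrix E2 E2 := by
    ext p q
    show TA (Matrix.of fun i j => X.submatrix E2 E2 ((p.1, i)) ((q.1, j))) p.2 q.2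
        = applyA TA X (E2 p) (E2 q)
    have harg : (Matrix.of fun i j => X.submatrix E2 E2 ((p.1, i)) ((q.1, j)))
        = Matrix.of fun i j => X (i, (E2 p).2) (j, (E2 q).2) := by
      ext i j; simp [hE2]
    rw [harg]
    rfl
  rw [heq] at h2
  exact (posSemidef_submatrix_equiv E2).mp h2

lemma applyB_trace {TB : Matrix b b ℂ →ₗ[ℂ] Matrix b b ℂ}
    (hT : ∀ Z, (TB Z).trace = Z.trace)
    (X : Matrix (a × b) (a × b) ℂ) : (applyB TB X).trace = X.trace := by
  rw [Matrix.trace, Matrix.trace]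
  rw [Fintype.sum_prod_type (f := fun p => (applyB TB X).diag p),
    Fintype.sum_prod_type (f := fun p => X.diag p)]
  refine Finset.sum_congr rfl fun i _ => ?_
  have : ∑ k, (applyB TB X).diag (i, k) = (TB (Matrix.of fun k l => X (i, k) (i, l))).trace := by
    rw [Matrix.trace]
    rfl
  rw [this, hT, Matrix.trace]
  rfl

lemma applyA_trace {TA : Matrix a a ℂ →ₗ[ℂ] Matrix a a ℂ}
    (hT : ∀ Z, (TA Z).trace = Z.trace)
    (X : Matrix (a × b) (a × b) ℂ) : (applyA TA X).trace = X.trace := by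
  rw [Matrix.trace, Matrix.trace]
  rw [Fintype.sum_prod_type (f := fun p => (applyA TA X).diag p),
    Fintype.sum_prod_type (f := fun p => X.diag p)]
  rw [Finset.sum_comm]
  conv_rhs => rw [Finset.sum_comm]
  refine Finset.sum_congr rfl fun k _ => ?_
  have : ∑ i, (applyA TA X).diag (i, k) = (TA (Matrix.of fun i j => X (i, k) (j, k))).trace := by
    rw [Matrix.trace]
    rfl
  rw [this, hT, Matrix.trace]
  rfl

lemma ptB_applyA (TA : Matrix a a ℂ →ₗ[ℂ] Matrix a a ℂ) (X : Matrix (a × b) (a × b) ℂ) :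
    ptB (applyA TA X) = applyA TA (ptB X) := by
  ext p q
  show TA (Matrix.of fun i j => X (i, q.2) (j, p.2)) p.1 q.1
      = TA (Matrix.of fun i j => ptB X (i, p.2) (j, q.2)) p.1 q.1
  congr 1

lemma ptB_applyB (TB : Matrix b b ℂ →ₗ[ℂ] Matrix b b ℂ) (X : Matrix (a × b) (a × b) ℂ) :
    ptB (applyB TB X) = applyB (transposeMap TB) (ptB X) := by
  ext p q
  show TB (Matrix.of fun k l => X (p.1, k) (q.1, l)) q.2 p.2
      = (TB (Matrix.of fun k l => ptB X (p.1, k) (q.1, l))ᵀ)ᵀ p.2 q.2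
  rw [Matrix.transpose_apply]
  congr 1

lemma ptB_prodMap (TA : Matrix a a ℂ →ₗ[ℂ] Matrix a a ℂ)
    (TB : Matrix b b ℂ →ₗ[ℂ] Matrix b b ℂ) (X : Matrix (a × b) (a × b) ℂ) :
    ptB (prodMap TA TB X) = prodMap TA (transposeMap TB) (ptB X) := by
  rw [prodMap, ptB_applyA, ptB_applyB, prodMap]

end Chunk3

section Chunk4
variable {a b : Type*} [Fintype a] [DecidableEq a] [Fintype b] [DecidableEq b]

lemma psd_sum {n ι : Type*} [Fintype n] [DecidableEq n] (s : Finset ι)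
    (f : ι → Matrix n n ℂ) (h : ∀ i ∈ s, (f i).PosSemidef) :
    (∑ i ∈ s, f i).PosSemidef :=
  Finset.sum_induction f _ (fun _ _ ha hb => ha.add hb) Matrix.PosSemidef.zero h

lemma applyB_sub (TB : Matrix b b ℂ →ₗ[ℂ] Matrix b b ℂ) (X Y : Matrix (a × b) (a × b) ℂ) :
    applyB TB (X - Y) = applyB TB X - applyB TB Y := by
  ext p q
  show TB (Matrix.of fun k l => (X - Y) (p.1, k) (q.1, l)) p.2 q.2 = _
  have harg : (Matrix.of fun k l => (X - Y) (p.1, k) (q.1, l))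
      = (Matrix.of fun k l => X (p.1, k) (q.1, l)) - (Matrix.of fun k l => Y (p.1, k) (q.1, l)) := by
    ext k l; simp [Matrix.sub_apply]
  rw [harg, map_sub]
  rfl

lemma applyA_sub (TA : Matrix a a ℂ →ₗ[ℂ] Matrix a a ℂ) (X Y : Matrix (a × b) (a × b) ℂ) :
    applyA TA (X - Y) = applyA TA X - applyA TA Y := by
  ext p q
  show TA (Matrix.of fun i j => (X - Y) (i, p.2) (j, q.2)) p.1 q.1 = _
  have harg : (Matrix.of fun i j => (X - Y) (i, p.2) (j, q.2))
      = (Matrix.of fun i j => X (i, p.2) (j, q.2)) - (Matrix.of fun i j => Y (i, p.2) (j, q.2)) := by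
    ext i j; simp [Matrix.sub_apply]
  rw [harg, map_sub]
  rfl

lemma prodMap_sub (TA : Matrix a a ℂ →ₗ[ℂ] Matrix a a ℂ) (TB : Matrix b b ℂ →ₗ[ℂ] Matrix b b ℂ)
    (X Y : Matrix (a × b) (a × b) ℂ) :
    prodMap TA TB (X - Y) = prodMap TA TB X - prodMap TA TB Y := by
  rw [prodMap, applyB_sub, applyA_sub, prodMap, prodMap]

lemma ptB_sum {ι : Type*} (s : Finset ι) (f : ι → Matrix (a × b) (a × b) ℂ) :
    ptB (∑ i ∈ s, f i) = ∑ i ∈ s, ptB (f i) := by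
  ext p q
  show (∑ i ∈ s, f i) (p.1, q.2) (q.1, p.2) = (∑ i ∈ s, ptB (f i)) p q
  rw [Matrix.sum_apply, Matrix.sum_apply]
  rfl

lemma ptB_smul (c : ℂ) (X : Matrix (a × b) (a × b) ℂ) : ptB (c • X) = c • ptB X := by
  ext p q
  rfl

lemma ptB_trace (X : Matrix (a × b) (a × b) ℂ) : (ptB X).trace = X.trace := by
  rw [Matrix.trace, Matrix.trace]
  rfl

lemma ptB_isHermitian {X : Matrix (a × b) (a × b) ℂ} (hX : X.IsHermitian) :
    (ptB X).IsHermitian := by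
  unfold Matrix.IsHermitian
  ext p q
  show star (ptB X q p) = ptB X p q
  have := congrFun (congrFun hX (p.1, q.2)) (q.1, p.2)
  simpa [Matrix.conjTranspose_apply, ptB] using this

lemma prodMap_trace {TA : Matrix a a ℂ →ₗ[ℂ] Matrix a a ℂ} {TB : Matrix b b ℂ →ₗ[ℂ] Matrix b b ℂ}
    (hA : ∀ Z, (TA Z).trace = Z.trace) (hB : ∀ Z, (TB Z).trace = Z.trace)
    (X : Matrix (a × b) (a × b) ℂ) : (prodMap TA TB X).trace = X.trace := by
  rw [prodMap, applyA_trace hA, applyB_trace hB]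

lemma prodMap_posSemidef {TA : Matrix a a ℂ →ₗ[ℂ] Matrix a a ℂ}
    {TB : Matrix b b ℂ →ₗ[ℂ] Matrix b b ℂ} (hA : IsCPTP TA) (hB : IsCPTP TB)
    {X : Matrix (a × b) (a × b) ℂ} (hX : X.PosSemidef) : (prodMap TA TB X).PosSemidef :=
  applyA_posSemidef hA (applyB_posSemidef hB hX)

lemma master {k : ℕ} (q : Fin k → ℝ)
    (TA : Fin k → (Matrix a a ℂ →ₗ[ℂ] Matrix a a ℂ))
    (TB : Fin k → (Matrix b b ℂ →ₗ[ℂ] Matrix b b ℂ))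
    (hcptp : ∀ i, IsCPTP (TA i) ∧ IsCPTP (TB i))
    (X : Matrix (a × b) (a × b) ℂ) (hX : X.IsHermitian) :
    traceNorm (ptB (∑ i, (q i : ℂ) • prodMap (TA i) (TB i) X))
      ≤ (∑ i, |q i|) * traceNorm (ptB X) := by
  classical
  have hY : (ptB X).IsHermitian := ptB_isHermitian hX
  obtain ⟨⟨P, N, hP, hN, hPN, htn⟩, -, -⟩ := herm_package hY
  set TB' : Fin k → (Matrix b b ℂ →ₗ[ℂ] Matrix b b ℂ) := fun i => transposeMap (TB i) with hTB'
  have hΨpsd : ∀ (i : Fin k) (Z : Matrix (a × b) (a × b) ℂ), Z.PosSemidef →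
      (prodMap (TA i) (TB' i) Z).PosSemidef := fun i Z hZ =>
    prodMap_posSemidef (hcptp i).1 (isCPTP_transposeMap (hcptp i).2) hZ
  have hΨtr : ∀ (i : Fin k) (Z : Matrix (a × b) (a × b) ℂ),
      (prodMap (TA i) (TB' i) Z).trace = Z.trace := fun i Z =>
    prodMap_trace (hcptp i).1.1 (isCPTP_transposeMap (hcptp i).2).1 Z
  have hcomm : ptB (∑ i, (q i : ℂ) • prodMap (TA i) (TB i) X)
      = ∑ i, (q i : ℂ) • prodMap (TA i) (TB' i) (ptB X) := by
    rw [ptB_sum]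
    refine Finset.sum_congr rfl fun i _ => ?_
    rw [ptB_smul, ptB_prodMap]
  rw [hcomm]
  set A' : Matrix (a × b) (a × b) ℂ :=
    ∑ i, ((|q i| : ℝ) : ℂ) • prodMap (TA i) (TB' i) (if 0 ≤ q i then P else N) with hA'def
  set B' : Matrix (a × b) (a × b) ℂ :=
    ∑ i, ((|q i| : ℝ) : ℂ) • prodMap (TA i) (TB' i) (if 0 ≤ q i then N else P) with hB'def
  have hA' : A'.PosSemidef := psd_sum _ _ fun i _ => by
    have : (if 0 ≤ q i then P else N).PosSemidef := by split_ifs <;> assumption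
    exact psd_smul (hΨpsd i _ this) (abs_nonneg _)
  have hB' : B'.PosSemidef := psd_sum _ _ fun i _ => by
    have : (if 0 ≤ q i then N else P).PosSemidef := by split_ifs <;> assumption
    exact psd_smul (hΨpsd i _ this) (abs_nonneg _)
  have hsplit : ∑ i, (q i : ℂ) • prodMap (TA i) (TB' i) (ptB X) = A' - B' := by
    rw [hA'def, hB'def, ← Finset.sum_sub_distrib]
    refine Finset.sum_congr rfl fun i _ => ?_
    rcases le_or_gt 0 (q i) with h | h
    · simp only [if_pos h]
      rw [abs_of_nonneg h]
      conv_lhs => rw [hPN, prodMap_sub]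
      rw [smul_sub]
    · simp only [if_neg (not_le.mpr h)]
      rw [abs_of_neg h]
      conv_lhs => rw [hPN, prodMap_sub]
      rw [smul_sub]
      push_cast
      rw [neg_smul, neg_smul]
      abel
  rw [hsplit]
  obtain ⟨-, hsubZ, -⟩ := herm_package (show (A' - B').IsHermitian from hA'.1.sub hB'.1)
  refine le_trans (hsubZ A' B' hA' hB' rfl) ?_
  have htrA' : A'.trace.re = ∑ i, |q i| * (if 0 ≤ q i then P else N).trace.re := by
    rw [hA'def, Matrix.trace_sum, Complex.re_sum]
    refine Finset.sum_congr rfl fun i _ => ?_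
    rw [Matrix.trace_smul, smul_eq_mul, Complex.re_ofReal_mul, hΨtr]
  have htrB' : B'.trace.re = ∑ i, |q i| * (if 0 ≤ q i then N else P).trace.re := by
    rw [hB'def, Matrix.trace_sum, Complex.re_sum]
    refine Finset.sum_congr rfl fun i _ => ?_
    rw [Matrix.trace_smul, smul_eq_mul, Complex.re_ofReal_mul, hΨtr]
  rw [htrA', htrB', ← Finset.sum_add_distrib, htn, Finset.sum_mul]
  refine le_of_eq (Finset.sum_congr rfl fun i _ => ?_)
  split_ifs <;> ring

end Chunk4

/-- If a noise channel E admits a CPTP product decomposition and its inverse E⁻¹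
admits decompositions into real combinations of product channels, with
η(E⁻¹) = log₂ of the minimal Σ|qᵢ| over such decompositions, then for any bipartite density
operator ρ₀ and ρ = E(ρ₀): E_N(ρ₀) − η(E⁻¹) ≤ E_N(ρ) ≤ E_N(ρ₀), where
E_N(σ) = log₂ ‖σ^{T_B}‖₁. -/
theorem negativity_physical_implementability_bound
    {a b : Type*} [Fintype a] [DecidableEq a] [Fintype b] [DecidableEq b]
    (E Einv : Matrix (a × b) (a × b) ℂ → Matrix (a × b) (a × b) ℂ)
    (hE : ∃ (k : ℕ) (p : Fin k → ℝ)
        (TA : Fin k → (Matrix a a ℂ →ₗ[ℂ] Matrix a a ℂ))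
        (TB : Fin k → (Matrix b b ℂ →ₗ[ℂ] Matrix b b ℂ)),
        (∀ i, 0 ≤ p i) ∧ (∑ i, p i = 1) ∧
        (∀ i, IsCPTP (TA i) ∧ IsCPTP (TB i)) ∧
        (∀ X, E X = ∑ i, (p i : ℂ) • prodMap (TA i) (TB i) X))
    (hinv : ∀ X, Einv (E X) = X)
    (S : Set ℝ)
    (hS : S = {s : ℝ | ∃ (k : ℕ) (q : Fin k → ℝ)
        (TA : Fin k → (Matrix a a ℂ →ₗ[ℂ] Matrix a a ℂ))
        (TB : Fin k → (Matrix b b ℂ →ₗ[ℂ] Matrix b b ℂ)),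
        (∀ i, IsCPTP (TA i) ∧ IsCPTP (TB i)) ∧
        (∀ X, Einv X = ∑ i, (q i : ℂ) • prodMap (TA i) (TB i) X) ∧
        s = ∑ i, |q i|})
    (hSne : S.Nonempty)
    (ρ₀ ρ : Matrix (a × b) (a × b) ℂ)
    (h0 : ρ₀.PosSemidef) (htr : ρ₀.trace = 1)
    (hρ : ρ = E ρ₀) :
    Real.logb 2 (traceNorm (ptB ρ₀)) - Real.logb 2 (sInf S)
        ≤ Real.logb 2 (traceNorm (ptB ρ))
      ∧ Real.logb 2 (traceNorm (ptB ρ)) ≤ Real.logb 2 (traceNorm (ptB ρ₀)) := by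
  classical
  obtain ⟨k0, p, TAp, TBp, hp0, hp1, hcp, hEdef⟩ := hE
  have hsump : ∑ i, |p i| = 1 := by
    rw [← hp1]
    exact Finset.sum_congr rfl fun i _ => abs_of_nonneg (hp0 i)
  have hupper : traceNorm (ptB ρ) ≤ traceNorm (ptB ρ₀) := by
    rw [hρ, hEdef]
    have h := master p TAp TBp hcp ρ₀ h0.1
    rwa [hsump, one_mul] at h
  have hρPSD : ρ.PosSemidef := by
    rw [hρ, hEdef]
    exact psd_sum _ _ fun i _ =>
      psd_smul (prodMap_posSemidef (hcp i).1 (hcp i).2 h0) (hp0 i)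
  have htrρ : ρ.trace = 1 := by
    rw [hρ, hEdef, Matrix.trace_sum]
    have he : ∀ i ∈ Finset.univ, ((p i : ℂ) • prodMap (TAp i) (TBp i) ρ₀).trace = (p i : ℂ) := by
      intro i _
      rw [Matrix.trace_smul, prodMap_trace (hcp i).1.1 (hcp i).2.1, htr, smul_eq_mul, mul_one]
    rw [Finset.sum_congr rfl he]
    exact_mod_cast hp1
  have hlow : ∀ s ∈ S, traceNorm (ptB ρ₀) ≤ s * traceNorm (ptB ρ) ∧ 1 ≤ s := by
    intro s hs
    rw [hS] at hs
    obtain ⟨k', q, TA', TB', hcp', hEinv, hsum⟩ := hs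
    have hrep : ρ₀ = ∑ i, (q i : ℂ) • prodMap (TA' i) (TB' i) ρ := by
      have h1 : Einv ρ = ρ₀ := by rw [hρ, hinv]
      rw [← h1, hEinv]
    constructor
    · have h := master q TA' TB' hcp' ρ hρPSD.1
      rw [hsum]
      calc traceNorm (ptB ρ₀)
          = traceNorm (ptB (∑ i, (q i : ℂ) • prodMap (TA' i) (TB' i) ρ)) := by rw [← hrep]
        _ ≤ (∑ i, |q i|) * traceNorm (ptB ρ) := h
    · have e : ρ₀.trace = ∑ i, (q i : ℂ) := by
        conv_lhs => rw [hrep]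
        rw [Matrix.trace_sum]
        refine Finset.sum_congr rfl fun i _ => ?_
        rw [Matrix.trace_smul, prodMap_trace (hcp' i).1.1 (hcp' i).2.1, htrρ, smul_eq_mul,
          mul_one]
      have h1 : (1 : ℂ) = ∑ i, (q i : ℂ) := by rw [← e, htr]
      have h2 : (1 : ℝ) = ∑ i, q i := by exact_mod_cast h1
      calc (1 : ℝ) = |∑ i, q i| := by rw [← h2]; norm_num
        _ ≤ ∑ i, |q i| := Finset.abs_sum_le_sum_abs _ _
        _ = s := hsum.symm
  have hc0 : 1 ≤ traceNorm (ptB ρ₀) := by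
    obtain ⟨-, -, habs⟩ := herm_package (ptB_isHermitian h0.1)
    have ht : (ptB ρ₀).trace = 1 := by rw [ptB_trace, htr]
    rw [ht] at habs
    simpa using habs
  obtain ⟨s₀, hs₀⟩ := hSne
  have hcpos : 0 < traceNorm (ptB ρ) := by
    rcases hlow s₀ hs₀ with ⟨hle, h1s⟩
    nlinarith
  have hSinf1 : (1 : ℝ) ≤ sInf S := le_csInf ⟨s₀, hs₀⟩ fun s hs => (hlow s hs).2
  have hkey : traceNorm (ptB ρ₀) ≤ sInf S * traceNorm (ptB ρ) := by
    have hd : ∀ s ∈ S, traceNorm (ptB ρ₀) / traceNorm (ptB ρ) ≤ s :=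
      fun s hs => (div_le_iff₀ hcpos).mpr ((hlow s hs).1)
    exact (div_le_iff₀ hcpos).mp (le_csInf ⟨s₀, hs₀⟩ hd)
  constructor
  · have h1 : Real.logb 2 (traceNorm (ptB ρ₀)) ≤ Real.logb 2 (sInf S * traceNorm (ptB ρ)) :=
      Real.logb_le_logb_of_le one_lt_two (by linarith) hkey
    rw [Real.logb_mul (by linarith : sInf S ≠ 0) (ne_of_gt hcpos)] at h1
    linarith
  · exact Real.logb_le_logb_of_le one_lt_two hcpos hupper
end
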